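/- If an MPS tensor A is left (or right) j-stable, then it satisfies the intersection property at all lengths k ≥ j+1: (S_k(A) ⊗ H) ∩ (H ⊗ S_k(A)) = S_{k+1}(A). -/

import Mathlib

open scoped BigOperators

noncomputable section

def prodA {d D : ℕ} (A : Fin d → Matrix (Fin D) (Fin D) ℂ) {k : ℕ} (s : Fin k → Fin d) :
    Matrix (Fin D) (Fin D) ℂ :=
  (List.ofFn fun t => A (s t)).prod

def mpsVec {d D : ℕ} (A : Fin d → Matrix (Fin D) (Fin D) ℂ) (X : Matrix (Fin D) (Fin D) ℂ)
    (k : ℕ) : (Fin k → Fin d) → ℂ :=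
  fun s => (X * prodA A s).trace

def mpsSpace {d D : ℕ} (A : Fin d → Matrix (Fin D) (Fin D) ℂ) (k : ℕ) :
    Submodule ℂ ((Fin k → Fin d) → ℂ) :=
  Submodule.span ℂ (Set.range fun X => mpsVec A X k)

/-- S ⊗ T inside H^{⊗(k+1)}, where S lives on the first k sites and T on the last site. -/
def tensSnoc {d k : ℕ} (S : Submodule ℂ ((Fin k → Fin d) → ℂ))
    (T : Submodule ℂ ((Fin 1 → Fin d) → ℂ)) :
    Submodule ℂ ((Fin (k + 1) → Fin d) → ℂ) :=
  Submodule.span ℂ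
    {v | ∃ f ∈ S, ∃ g ∈ T,
      v = fun s => f (fun t => s (Fin.castSucc t)) * g (fun _ => s (Fin.last k))}

/-- T ⊗ S inside H^{⊗(k+1)}, where T lives on the first site and S on the last k sites. -/
def tensCons {d k : ℕ} (T : Submodule ℂ ((Fin 1 → Fin d) → ℂ))
    (S : Submodule ℂ ((Fin k → Fin d) → ℂ)) :
    Submodule ℂ ((Fin (k + 1) → Fin d) → ℂ) :=
  Submodule.span ℂ
    {v | ∃ f ∈ S, ∃ g ∈ T,
      v = fun s => g (fun _ => s 0) * f (fun t => s t.succ)}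

/-- The virtual MPS subspace V_j(A) ⊆ M_D. -/
def virtSpace {d D : ℕ} (A : Fin d → Matrix (Fin D) (Fin D) ℂ) (j : ℕ) :
    Submodule ℂ (Matrix (Fin D) (Fin D) ℂ) :=
  Submodule.span ℂ (Set.range fun s : Fin j → Fin d => prodA A s)

/-- A is left j-stable. -/
def LeftStable {d D : ℕ} (A : Fin d → Matrix (Fin D) (Fin D) ℂ) (j : ℕ) : Prop :=
  ∃ Y : Fin d → Matrix (Fin D) (Fin D) ℂ,
    (∀ i, ∀ M ∈ virtSpace A (j + 1), Y i * M ∈ virtSpace A j) ∧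
    ∀ M ∈ virtSpace A (j + 1), (∑ i, A i * Y i) * M = M

/-- A is right j-stable. -/
def RightStable {d D : ℕ} (A : Fin d → Matrix (Fin D) (Fin D) ℂ) (j : ℕ) : Prop :=
  ∃ Y : Fin d → Matrix (Fin D) (Fin D) ℂ,
    (∀ i, ∀ M ∈ virtSpace A (j + 1), M * Y i ∈ virtSpace A j) ∧
    ∀ M ∈ virtSpace A (j + 1), M * (∑ i, Y i * A i) = M

namespace Aux

variable {d D : ℕ} (A : Fin d → Matrix (Fin D) (Fin D) ℂ)

def W (w : List (Fin d)) : Matrix (Fin D) (Fin D) ℂ := (w.map A).prod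

lemma W_append (u w : List (Fin d)) : W A (u ++ w) = W A u * W A w := by
  simp [W]

lemma W_singleton (i : Fin d) : W A [i] = A i := by simp [W]

lemma prodA_eq_W {k : ℕ} (s : Fin k → Fin d) : prodA A s = W A (List.ofFn s) := by
  rw [W, List.map_ofFn]; rfl

def lt' {n : ℕ} (w : List (Fin d)) (h : w.length = n) : Fin n → Fin d :=
  fun t => w.get (Fin.cast h.symm t)

lemma prodA_lt' {n : ℕ} (w : List (Fin d)) (h : w.length = n) :
    prodA A (lt' w h) = W A w := by
  subst h
  rw [prodA_eq_W]
  have h1 : lt' w rfl = w.get := rfl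
  rw [h1, List.ofFn_get]

lemma lt'_ofFn {k : ℕ} (s : Fin k → Fin d) (h : (List.ofFn s).length = k) :
    lt' (List.ofFn s) h = s := by
  funext t
  simp [lt', List.get_ofFn]

lemma W_mem_virt {j : ℕ} (w : List (Fin d)) (h : w.length = j) :
    W A w ∈ virtSpace A j := by
  subst h
  exact Submodule.subset_span ⟨lt' w rfl, prodA_lt' A w rfl⟩

lemma lt'_cons {n : ℕ} (a : Fin d) (w : List (Fin d)) (hw : w.length = n)
    (h' : (a :: w).length = n + 1) : lt' (a :: w) h' = Fin.cons a (lt' w hw) := by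
  funext t
  refine Fin.cases ?_ (fun t' => ?_) t <;> simp [lt']

lemma lt'_snoc {n : ℕ} (w : List (Fin d)) (hw : w.length = n) (i : Fin d)
    (h' : (w ++ [i]).length = n + 1) : lt' (w ++ [i]) h' = Fin.snoc (lt' w hw) i := by
  funext t
  subst hw
  refine Fin.lastCases ?_ (fun t' => ?_) t
  · simp only [Fin.snoc_last, lt', List.get_eq_getElem, Fin.coe_cast, Fin.val_last]
    exact List.getElem_concat_length rfl _
  · simp only [Fin.snoc_castSucc, lt', List.get_eq_getElem, Fin.coe_cast, Fin.coe_castSucc]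
    exact List.getElem_append_left t'.isLt

end Aux

def mpsLM {d D : ℕ} (A : Fin d → Matrix (Fin D) (Fin D) ℂ) (k : ℕ) :
    Matrix (Fin D) (Fin D) ℂ →ₗ[ℂ] ((Fin k → Fin d) → ℂ) where
  toFun X := mpsVec A X k
  map_add' X X' := funext fun s => by simp [mpsVec, Matrix.add_mul]
  map_smul' c X := funext fun s => by simp [mpsVec, Matrix.smul_mul]

lemma mem_mpsSpace_iff {d D : ℕ} (A : Fin d → Matrix (Fin D) (Fin D) ℂ) {k : ℕ}
    {v : (Fin k → Fin d) → ℂ} : v ∈ mpsSpace A k ↔ ∃ X, mpsVec A X k = v := by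
  have h1 : mpsSpace A k = LinearMap.range (mpsLM A k) := by
    rw [mpsSpace, show (fun X => mpsVec A X k) = ⇑(mpsLM A k) from rfl,
      ← LinearMap.coe_range, Submodule.span_eq]
  rw [h1, LinearMap.mem_range]
  exact ⟨fun ⟨X, hX⟩ => ⟨X, hX⟩, fun ⟨X, hX⟩ => ⟨X, hX⟩⟩

lemma trace_mul_expand {D : ℕ} (M Q : Matrix (Fin D) (Fin D) ℂ) :
    (M * Q).trace = ∑ a, ∑ b, M a b * Q b a := by
  simp [Matrix.trace, Matrix.mul_apply, Matrix.diag]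

lemma trace_stdBasis_mul {D : ℕ} (a b : Fin D) (M : Matrix (Fin D) (Fin D) ℂ) :
    (Matrix.single b a 1 * M).trace = M a b := by
  rw [trace_mul_expand]
  simp only [Matrix.single, Matrix.of_apply, ite_mul, one_mul, zero_mul]
  rw [Finset.sum_eq_single b]
  · rw [Finset.sum_eq_single a] <;> simp +contextual [eq_comm]
  · intro c _ hc
    apply Finset.sum_eq_zero
    intro e _
    simp [Ne.symm hc]
  · simp

lemma snoc_slice {d k : ℕ} (S : Submodule ℂ ((Fin k → Fin d) → ℂ))
    (T : Submodule ℂ ((Fin 1 → Fin d) → ℂ)) {v : (Fin (k+1) → Fin d) → ℂ}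
    (hv : v ∈ tensSnoc S T) (i : Fin d) :
    (fun s' => v ((Fin.snoc s' i : Fin (k+1) → Fin d))) ∈ S := by
  induction hv using Submodule.span_induction with
  | mem x hx =>
    obtain ⟨f, hf, g, _, rfl⟩ := hx
    have h2 : (fun s' : Fin k → Fin d => f (fun t => (Fin.snoc s' i : Fin (k+1) → Fin d) (Fin.castSucc t)) *
        g (fun _ => (Fin.snoc s' i : Fin (k+1) → Fin d) (Fin.last k))) = g (fun _ => i) • f := by
      funext s'
      simp [Fin.snoc_castSucc, Fin.snoc_last, mul_comm]
    show (fun s' : Fin k → Fin d => f (fun t => (Fin.snoc s' i : Fin (k+1) → Fin d) (Fin.castSucc t)) *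
        g (fun _ => (Fin.snoc s' i : Fin (k+1) → Fin d) (Fin.last k))) ∈ S
    rw [h2]
    exact S.smul_mem _ hf
  | zero => exact S.zero_mem
  | add x y hx hy ihx ihy => exact S.add_mem ihx ihy
  | smul c x hx ihx => exact S.smul_mem c ihx

lemma cons_slice {d k : ℕ} (T : Submodule ℂ ((Fin 1 → Fin d) → ℂ))
    (S : Submodule ℂ ((Fin k → Fin d) → ℂ)) {v : (Fin (k+1) → Fin d) → ℂ}
    (hv : v ∈ tensCons T S) (a : Fin d) :
    (fun s' => v ((Fin.cons a s' : Fin (k+1) → Fin d))) ∈ S := by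
  induction hv using Submodule.span_induction with
  | mem x hx =>
    obtain ⟨f, hf, g, _, rfl⟩ := hx
    have h2 : (fun s' : Fin k → Fin d => g (fun _ => (Fin.cons a s' : Fin (k+1) → Fin d) 0) *
        f (fun t => (Fin.cons a s' : Fin (k+1) → Fin d) t.succ)) = g (fun _ => a) • f := by
      funext s'
      simp [Fin.cons_zero, Fin.cons_succ]
    show (fun s' : Fin k → Fin d => g (fun _ => (Fin.cons a s' : Fin (k+1) → Fin d) 0) *
        f (fun t => (Fin.cons a s' : Fin (k+1) → Fin d) t.succ)) ∈ S
    rw [h2]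
    exact S.smul_mem _ hf
  | zero => exact S.zero_mem
  | add x y hx hy ihx ihy => exact S.add_mem ihx ihy
  | smul c x hx ihx => exact S.smul_mem c ihx

lemma W_cons {d D : ℕ} (A : Fin d → Matrix (Fin D) (Fin D) ℂ) (a : Fin d) (w : List (Fin d)) :
    Aux.W A (a :: w) = A a * Aux.W A w := by simp [Aux.W]

lemma prodA_snoc {d D k : ℕ} (A : Fin d → Matrix (Fin D) (Fin D) ℂ) (s : Fin (k+1) → Fin d) :
    prodA A s = prodA A (fun t => s (Fin.castSucc t)) * A (s (Fin.last k)) := by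
  rw [Aux.prodA_eq_W, Aux.prodA_eq_W, List.ofFn_succ', List.concat_eq_append, Aux.W_append,
    Aux.W_singleton]

lemma prodA_cons {d D k : ℕ} (A : Fin d → Matrix (Fin D) (Fin D) ℂ) (s : Fin (k+1) → Fin d) :
    prodA A s = A (s 0) * prodA A (fun t => s t.succ) := by
  rw [Aux.prodA_eq_W, Aux.prodA_eq_W, List.ofFn_succ, W_cons]

lemma mps_le_snoc {d D k : ℕ} (A : Fin d → Matrix (Fin D) (Fin D) ℂ) :
    mpsSpace A (k+1) ≤ tensSnoc (mpsSpace A k) ⊤ := by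
  rw [mpsSpace]
  apply Submodule.span_le.2
  rintro _ ⟨X, rfl⟩
  have hv : mpsVec A X (k+1) = ∑ ab : Fin D × Fin D,
      (fun s : Fin (k+1) → Fin d =>
        mpsVec A (Matrix.single ab.2 ab.1 1 * X) k (fun t => s (Fin.castSucc t)) *
        (A (s (Fin.last k))) ab.2 ab.1) := by
    funext s
    rw [Finset.sum_apply, Fintype.sum_prod_type]
    show (X * prodA A s).trace = _
    rw [prodA_snoc, ← mul_assoc, trace_mul_expand]
    refine Finset.sum_congr rfl fun a _ => Finset.sum_congr rfl fun b _ => ?_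
    show _ = mpsVec A (Matrix.single b a 1 * X) k (fun t => s (Fin.castSucc t)) *
        (A (s (Fin.last k))) b a
    rw [mpsVec]
    show (X * prodA A fun t => s (Fin.castSucc t)) a b * _ =
      (Matrix.single b a 1 * X * prodA A fun t => s (Fin.castSucc t)).trace * _
    rw [mul_assoc, trace_stdBasis_mul]
  show mpsVec A X (k+1) ∈ _
  rw [hv]
  apply Submodule.sum_mem
  intro ab _
  apply Submodule.subset_span
  exact ⟨mpsVec A (Matrix.single ab.2 ab.1 1 * X) k,
    Submodule.subset_span ⟨_, rfl⟩,
    (fun u : Fin 1 → Fin d => (A (u 0)) ab.2 ab.1), trivial, rfl⟩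

lemma mps_le_cons {d D k : ℕ} (A : Fin d → Matrix (Fin D) (Fin D) ℂ) :
    mpsSpace A (k+1) ≤ tensCons ⊤ (mpsSpace A k) := by
  rw [mpsSpace]
  apply Submodule.span_le.2
  rintro _ ⟨X, rfl⟩
  have hv : mpsVec A X (k+1) = ∑ ab : Fin D × Fin D,
      (fun s : Fin (k+1) → Fin d =>
        (X * A (s 0)) ab.1 ab.2 *
        mpsVec A (Matrix.single ab.1 ab.2 1) k (fun t => s t.succ)) := by
    funext s
    rw [Finset.sum_apply, Fintype.sum_prod_type]
    show (X * prodA A s).trace = _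
    rw [prodA_cons, ← mul_assoc, trace_mul_expand]
    refine Finset.sum_congr rfl fun a _ => Finset.sum_congr rfl fun b _ => ?_
    show (X * A (s 0)) a b * (prodA A fun t => s t.succ) b a = _
    rw [mpsVec, trace_stdBasis_mul]
  show mpsVec A X (k+1) ∈ _
  rw [hv]
  apply Submodule.sum_mem
  intro ab _
  apply Submodule.subset_span
  exact ⟨mpsVec A (Matrix.single ab.1 ab.2 1) k,
    Submodule.subset_span ⟨_, rfl⟩,
    (fun u : Fin 1 → Fin d => (X * A (u 0)) ab.1 ab.2), trivial, rfl⟩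

lemma lt'_congr {d n : ℕ} {w1 w2 : List (Fin d)} (h : w1 = w2) (h1 : w1.length = n)
    (h2 : w2.length = n) : Aux.lt' w1 h1 = Aux.lt' w2 h2 := by subst h; rfl


/-- a j-stable tensor satisfies the intersection property at all k ≥ j+1. -/
theorem stable_implies_intersection {d D : ℕ} (A : Fin d → Matrix (Fin D) (Fin D) ℂ)
    (j : ℕ) (h : LeftStable A j ∨ RightStable A j) :
    ∀ k, j + 1 ≤ k →
      tensSnoc (mpsSpace A k) ⊤ ⊓ tensCons ⊤ (mpsSpace A k) = mpsSpace A (k + 1) := by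
  intro k hk
  obtain ⟨m, rfl⟩ := Nat.exists_eq_add_of_le hk
  refine le_antisymm ?_ (le_inf (mps_le_snoc A) (mps_le_cons A))
  intro v hv
  rw [Submodule.mem_inf] at hv
  choose X hX using fun i => (mem_mpsSpace_iff A).1 (snoc_slice _ _ hv.1 i)
  choose Z hZ using fun a => (mem_mpsSpace_iff A).1 (cons_slice _ _ hv.2 a)
  have hXL : ∀ (i : Fin d) (w : List (Fin d)) (hw : w.length = j + 1 + m),
      (X i * Aux.W A w).trace = v (Aux.lt' (w ++ [i]) (by simp [hw])) := by
    intro i w hw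
    rw [Aux.lt'_snoc w hw i]
    calc (X i * Aux.W A w).trace = mpsVec A (X i) (j + 1 + m) (Aux.lt' w hw) := by
          rw [mpsVec, Aux.prodA_lt']
      _ = v (Fin.snoc (Aux.lt' w hw) i) := congrFun (hX i) _
  have hZL : ∀ (a : Fin d) (w : List (Fin d)) (hw : w.length = j + 1 + m),
      (Z a * Aux.W A w).trace = v (Aux.lt' (a :: w) (by simp [hw])) := by
    intro a w hw
    rw [Aux.lt'_cons a w hw]
    calc (Z a * Aux.W A w).trace = mpsVec A (Z a) (j + 1 + m) (Aux.lt' w hw) := by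
          rw [mpsVec, Aux.prodA_lt']
      _ = v (Fin.cons a (Aux.lt' w hw)) := congrFun (hZ a) _
  rcases h with ⟨Y, hY1, hY2⟩ | ⟨Y, hY1, hY2⟩
  · -- left stable : use ∑ i, Z i * Y i
    refine (mem_mpsSpace_iff A).2 ⟨∑ i, Z i * Y i, funext fun s => ?_⟩
    set w := List.ofFn s with hwdef
    have hw : w.length = j + 1 + m + 1 := by simp [hwdef]
    have hp : (w.take (j+1)).length = j + 1 := by rw [List.length_take, hw]; omega
    have hr : (w.drop (j+1)).length = m + 1 := by rw [List.length_drop, hw]; omega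
    have hrne : w.drop (j+1) ≠ [] := List.ne_nil_of_length_pos (by omega)
    set p := w.take (j+1) with hpdef
    set r := w.drop (j+1) with hrdef
    set q := r.dropLast with hqdef
    set b := r.getLast hrne with hbdef
    have hq : q.length = m := by rw [hqdef, List.length_dropLast, hr]; omega
    have hqb : q ++ [b] = r := List.dropLast_append_getLast hrne
    have hpr : p ++ r = w := List.take_append_drop _ _
    have hMp : Aux.W A p ∈ virtSpace A (j + 1) := Aux.W_mem_virt A p hp
    have key : ∀ i : Fin d, ∀ N ∈ virtSpace A j,
        (Z i * (N * Aux.W A r)).trace = (X b * (A i * N * Aux.W A q)).trace := by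
      intro i N hN
      induction hN using Submodule.span_induction with
      | mem x hx =>
        obtain ⟨u, rfl⟩ := hx
        have l1 : (List.ofFn u ++ r).length = j + 1 + m := by
          rw [List.length_append, List.length_ofFn, hr]; omega
        have l2 : ([i] ++ List.ofFn u ++ q).length = j + 1 + m := by
          simp [hq]; omega
        have h1 : prodA A u * Aux.W A r = Aux.W A (List.ofFn u ++ r) := by
          rw [Aux.prodA_eq_W, Aux.W_append]
        have h2 : A i * prodA A u * Aux.W A q = Aux.W A ([i] ++ List.ofFn u ++ q) := by
          rw [Aux.prodA_eq_W, Aux.W_append, Aux.W_append, Aux.W_singleton]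
        rw [h1, hZL i _ l1, h2, hXL b _ l2]
        apply congrArg
        apply lt'_congr
        rw [← hqb]
        simp
      | zero => simp
      | add x y hx hy ihx ihy =>
        simp only [add_mul, mul_add, Matrix.trace_add, ihx, ihy]
      | smul c x hx ihx =>
        simp only [smul_mul_assoc, mul_smul_comm, Matrix.trace_smul, ihx]
    have hws : prodA A s = Aux.W A p * Aux.W A r := by
      rw [Aux.prodA_eq_W, ← hwdef, ← hpr, Aux.W_append]
    show ((∑ i, Z i * Y i) * prodA A s).trace = v s
    calc ((∑ i, Z i * Y i) * prodA A s).trace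
        = ∑ i, (Z i * ((Y i * Aux.W A p) * Aux.W A r)).trace := by
          rw [hws, Finset.sum_mul, Matrix.trace_sum]
          exact Finset.sum_congr rfl fun i _ => by rw [mul_assoc, mul_assoc]
      _ = ∑ i, (X b * (A i * (Y i * Aux.W A p) * Aux.W A q)).trace :=
          Finset.sum_congr rfl fun i _ => key i _ (hY1 i _ hMp)
      _ = (X b * ((∑ i, A i * Y i) * Aux.W A p * Aux.W A q)).trace := by
          have hsum : (∑ i, A i * Y i) * Aux.W A p * Aux.W A q
              = ∑ i, A i * (Y i * Aux.W A p) * Aux.W A q := by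
            rw [Finset.sum_mul, Finset.sum_mul]
            exact Finset.sum_congr rfl fun i _ => by noncomm_ring
          rw [hsum, Finset.mul_sum, Matrix.trace_sum]
      _ = (X b * (Aux.W A p * Aux.W A q)).trace := by rw [hY2 _ hMp]
      _ = v s := by
          rw [← Aux.W_append, hXL b (p ++ q) (by simp [hp, hq])]
          have hlist : (p ++ q) ++ [b] = w := by rw [List.append_assoc, hqb, hpr]
          rw [lt'_congr hlist _ (hlist ▸ (by simp [hp, hq]; omega))]
          exact congrArg v (Aux.lt'_ofFn s _)
  · -- right stable : use ∑ i, Y i * X i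
    refine (mem_mpsSpace_iff A).2 ⟨∑ i, Y i * X i, funext fun s => ?_⟩
    set a := s 0 with hadef
    set w' := List.ofFn (fun t : Fin (j + 1 + m) => s t.succ) with hw'def
    have hw' : w'.length = j + 1 + m := by simp [hw'def]
    have hL : (w'.take m).length = m := by rw [List.length_take, hw']; omega
    have hMl : (w'.drop m).length = j + 1 := by rw [List.length_drop, hw']; omega
    set L := w'.take m with hLdef
    set Mp := w'.drop m with hMpdef
    have hLM : L ++ Mp = w' := List.take_append_drop _ _
    have hMpv : Aux.W A Mp ∈ virtSpace A (j + 1) := Aux.W_mem_virt A Mp hMl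
    have key : ∀ i : Fin d, ∀ N ∈ virtSpace A j,
        (X i * (A a * Aux.W A L * N)).trace = (Z a * (Aux.W A L * N * A i)).trace := by
      intro i N hN
      induction hN using Submodule.span_induction with
      | mem x hx =>
        obtain ⟨u, rfl⟩ := hx
        have l1 : ([a] ++ L ++ List.ofFn u).length = j + 1 + m := by simp [hL]; omega
        have l2 : (L ++ List.ofFn u ++ [i]).length = j + 1 + m := by simp [hL]; omega
        have h1 : A a * Aux.W A L * prodA A u = Aux.W A ([a] ++ L ++ List.ofFn u) := by
          rw [Aux.prodA_eq_W, Aux.W_append, Aux.W_append, Aux.W_singleton]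
        have h2 : Aux.W A L * prodA A u * A i = Aux.W A (L ++ List.ofFn u ++ [i]) := by
          rw [Aux.prodA_eq_W, Aux.W_append, Aux.W_append, Aux.W_singleton]
        rw [h1, hXL i _ l1, h2, hZL a _ l2]
        apply congrArg
        apply lt'_congr
        simp
      | zero => simp
      | add x y hx hy ihx ihy =>
        simp only [add_mul, mul_add, Matrix.trace_add, ihx, ihy]
      | smul c x hx ihx =>
        simp only [smul_mul_assoc, mul_smul_comm, Matrix.trace_smul, ihx]
    have hws : prodA A s = A a * (Aux.W A L * Aux.W A Mp) := by
      rw [prodA_cons A s, Aux.prodA_eq_W, ← hw'def, ← hLM, Aux.W_append]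
    show ((∑ i, Y i * X i) * prodA A s).trace = v s
    calc ((∑ i, Y i * X i) * prodA A s).trace
        = ∑ i, (X i * (A a * Aux.W A L * (Aux.W A Mp * Y i))).trace := by
          rw [Finset.sum_mul, Matrix.trace_sum]
          refine Finset.sum_congr rfl fun i _ => ?_
          rw [Matrix.trace_mul_cycle, Matrix.trace_mul_comm]
          congr 1
          rw [hws]
          noncomm_ring
      _ = ∑ i, (Z a * (Aux.W A L * (Aux.W A Mp * Y i) * A i)).trace :=
          Finset.sum_congr rfl fun i _ => key i _ (hY1 i _ hMpv)
      _ = (Z a * (Aux.W A L * (Aux.W A Mp * (∑ i, Y i * A i)))).trace := by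
          have hsum : Aux.W A L * (Aux.W A Mp * (∑ i, Y i * A i))
              = ∑ i, Aux.W A L * (Aux.W A Mp * Y i) * A i := by
            rw [Finset.mul_sum, Finset.mul_sum]
            exact Finset.sum_congr rfl fun i _ => by noncomm_ring
          rw [hsum, Finset.mul_sum, Matrix.trace_sum]
      _ = (Z a * (Aux.W A L * Aux.W A Mp)).trace := by rw [hY2 _ hMpv]
      _ = v s := by
          rw [← Aux.W_append, hZL a (L ++ Mp) (by simp [hL, hMl]; omega)]
          have hlist : a :: (L ++ Mp) = List.ofFn s := by
            rw [hLM, hw'def, hadef, ← List.ofFn_succ]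
          rw [lt'_congr hlist _ (hlist ▸ (by simp [hL, hMl]; omega))]
          exact congrArg v (Aux.lt'_ofFn s _)
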